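/- Let ℓ, p, q be distinct primes such that q ≡ 8 (mod 9) and {ℓ mod 9, p mod 9} = {2, 5}. Then for every prime v there exist y₀, y₂, y₃ ∈ ℤ_v with y₀³ + ℓ + p·q·y₂³ + q·ℓ²·y₃³ = 0. -/

import Mathlib

open Polynomial

variable {v : ℕ} [hv : Fact v.Prime]

lemma toZMod_eq_zero_iff (x : ℤ_[v]) : PadicInt.toZMod x = 0 ↔ ‖x‖ < 1 := by
  rw [← RingHom.mem_ker, PadicInt.ker_toZMod, IsLocalRing.mem_maximalIdeal, mem_nonunits_iff,
    PadicInt.not_isUnit_iff]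

lemma norm_eq_one_of_toZMod_ne_zero {x : ℤ_[v]} (h : PadicInt.toZMod x ≠ 0) : ‖x‖ = 1 :=
  le_antisymm x.norm_le_one (not_lt.mp (fun hlt => h ((toZMod_eq_zero_iff x).mpr hlt)))

lemma cube_root_exists (b a : ℤ_[v]) (h : ‖a ^ 3 + b‖ < ‖3 * a ^ 2‖ ^ 2) :
    ∃ z : ℤ_[v], z ^ 3 + b = 0 := by
  have he : (X ^ 3 + C b : ℤ_[v][X]).eval a = a ^ 3 + b := by simp
  have hd : ((X ^ 3 + C b : ℤ_[v][X]).derivative).eval a = 3 * a ^ 2 := by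
    simp [derivative_X_pow]
    left; norm_num
  obtain ⟨z, hz, -⟩ := hensels_lemma (F := X ^ 3 + C b) (a := a) (by rw [coe_aeval_eq_eval, he, hd]; exact h)
  exact ⟨z, by simpa using hz⟩

lemma solve_one_var (hv3 : v ≠ 3) (u b a : ℤ_[v])
    (hu : PadicInt.toZMod u ≠ 0) (ha : PadicInt.toZMod a ≠ 0)
    (h0 : PadicInt.toZMod (u * a ^ 3 + b) = 0) : ∃ z : ℤ_[v], u * z ^ 3 + b = 0 := by
  obtain ⟨w, hw⟩ : ∃ w, u * w = 1 := by
    have : IsUnit u := PadicInt.isUnit_iff.mpr (norm_eq_one_of_toZMod_ne_zero hu)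
    exact isUnit_iff_exists_inv.mp this
  have h3 : PadicInt.toZMod (3 * a ^ 2 : ℤ_[v]) ≠ 0 := by
    rw [map_mul, map_pow]
    refine mul_ne_zero ?_ (pow_ne_zero _ ha)
    have : ((3 : ℕ) : ZMod v) ≠ 0 := by
      rw [Ne, ZMod.natCast_eq_zero_iff]
      intro hdvd
      exact hv3 ((Nat.prime_dvd_prime_iff_eq hv.out (by norm_num)).mp hdvd)
    rw [show ((3:ℕ):ZMod v) = (3:ZMod v) by push_cast; ring] at this
    rw [show (PadicInt.toZMod (3:ℤ_[v])) = ((3:ℕ):ZMod v) by rw [show ((3:ℤ_[v])) = ((3:ℕ):ℤ_[v]) by push_cast; ring, map_natCast]]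
    push_cast
    exact this
  have hnorm3 : ‖(3 * a ^ 2 : ℤ_[v])‖ = 1 := norm_eq_one_of_toZMod_ne_zero h3
  have hwu : PadicInt.toZMod w * PadicInt.toZMod u = 1 := by
    rw [← map_mul, mul_comm w u, hw, map_one]
  have hb : PadicInt.toZMod (a ^ 3 + w * b) = 0 := by
    have : PadicInt.toZMod w * PadicInt.toZMod (u * a ^ 3 + b) = 0 := by rw [h0, mul_zero]
    rw [map_add, map_mul] at this ⊢
    calc PadicInt.toZMod (a ^ 3) + PadicInt.toZMod w * PadicInt.toZMod b
        = PadicInt.toZMod w * (PadicInt.toZMod u * PadicInt.toZMod (a ^ 3) + PadicInt.toZMod b)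
          + (1 - PadicInt.toZMod w * PadicInt.toZMod u) * PadicInt.toZMod (a ^ 3) := by ring
      _ = 0 := by rw [this, hwu]; ring
  obtain ⟨z, hz⟩ := cube_root_exists (w * b) a
    (by rw [hnorm3, one_pow, ← toZMod_eq_zero_iff]; exact hb)
  refine ⟨z, ?_⟩
  have : u * (z ^ 3 + w * b) = 0 := by rw [hz, mul_zero]
  calc u * z ^ 3 + b = u * (z ^ 3 + w * b) + (1 - u * w) * b := by ring
    _ = 0 := by rw [this, hw]; ring

lemma cube_surj (h : v % 3 ≠ 1) (c : ZMod v) : ∃ x : ZMod v, x ^ 3 = c := by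
  rcases Nat.eq_zero_or_pos (v % 3) with h0 | hpos
  · -- v = 3
    have hv3 : v = 3 := by
      have : (3 : ℕ) ∣ v := Nat.dvd_of_mod_eq_zero h0
      exact ((Nat.prime_dvd_prime_iff_eq (by norm_num) hv.out).mp this).symm
    subst hv3
    exact ⟨c, ZMod.pow_card c⟩
  · have h2 : v % 3 = 2 := by omega
    have hv2 : 2 ≤ v := hv.out.two_le
    set k := (2 * v - 1) / 3 with hk
    have h3k : 3 * k = 2 * (v - 1) + 1 := by omega
    refine ⟨c ^ k, ?_⟩
    rcases eq_or_ne c 0 with rfl | hc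
    · rw [← pow_mul, mul_comm, h3k]
      simp
    · rw [← pow_mul, mul_comm, h3k, pow_add, pow_mul', ZMod.pow_card_sub_one_eq_one hc, one_pow, pow_one, one_mul]

open Finset Pointwise in
lemma cube_image_card (c : ZMod v) (hc : c ≠ 0) :
    v + 2 ≤ 3 * #(univ.image fun x : ZMod v => c * x ^ 3) := by
  have hdeg : (0 : WithBot ℕ) < (C c * X ^ 3 : (ZMod v)[X]).degree := by
    rw [degree_C_mul (by exact hc), degree_X_pow]
    norm_num
  have hbase := FiniteField.card_image_polynomial_eval (R := ZMod v) (p := C c * X ^ 3) hdeg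
  have hnd : (C c * X ^ 3 : (ZMod v)[X]).natDegree = 3 := by
    rw [natDegree_C_mul (by exact hc), natDegree_X_pow]
  rw [hnd, ZMod.card] at hbase
  have himg : (univ.image fun x : ZMod v => eval x (C c * X ^ 3)) =
      (univ.image fun x : ZMod v => c * x ^ 3) := by
    congr 1
    funext x
    simp
  rw [himg] at hbase
  rcases eq_or_ne (v % 3) 1 with h1 | h1
  · omega
  · -- cube map surjective, so c * x^3 surjective
    have hsurj : ∀ d : ZMod v, ∃ x : ZMod v, c * x ^ 3 = d := by
      intro d
      obtain ⟨x, hx⟩ := cube_surj h1 (c⁻¹ * d)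
      exact ⟨x, by rw [hx, ← mul_assoc, mul_inv_cancel₀ hc, one_mul]⟩
    have : (univ.image fun x : ZMod v => c * x ^ 3) = univ := by
      refine eq_univ_of_forall fun d => ?_
      obtain ⟨x, hx⟩ := hsurj d
      exact mem_image.mpr ⟨x, mem_univ x, hx⟩
    rw [this, card_univ, ZMod.card]
    have := hv.out.two_le
    omega

open Finset Pointwise in
lemma three_cubes_surj (c₁ c₂ : ZMod v) (h₁ : c₁ ≠ 0) (h₂ : c₂ ≠ 0) (d : ZMod v) :
    ∃ x y z : ZMod v, z ^ 3 + c₁ * x ^ 3 + c₂ * y ^ 3 = d := by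
  classical
  set A := univ.image fun x : ZMod v => (1 : ZMod v) * x ^ 3 with hA
  set B := univ.image fun x : ZMod v => c₁ * x ^ 3 with hB
  set C := univ.image fun x : ZMod v => c₂ * x ^ 3 with hC
  have hAc : v + 2 ≤ 3 * #A := cube_image_card 1 one_ne_zero
  have hBc : v + 2 ≤ 3 * #B := cube_image_card c₁ h₁
  have hCc : v + 2 ≤ 3 * #C := cube_image_card c₂ h₂
  have hne : (univ : Finset (ZMod v)).Nonempty := univ_nonempty
  have hAn : A.Nonempty := hne.image _
  have hBn : B.Nonempty := hne.image _
  have hCn : C.Nonempty := hne.image _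
  have h1 := ZMod.cauchy_davenport hv.out hAn hBn
  have h2 := ZMod.cauchy_davenport hv.out (hAn.add hBn) hCn
  have hle : #(A + B + C) ≤ v := by
    have := card_le_univ (A + B + C)
    rwa [ZMod.card] at this
  have hcard : #(A + B + C) = v := by omega
  have huniv : A + B + C = univ := eq_univ_of_card _ (by rw [hcard, ZMod.card])
  have hd : d ∈ A + B + C := huniv ▸ mem_univ d
  rw [mem_add] at hd
  obtain ⟨ab, hab, cc, hcc, habc⟩ := hd
  rw [mem_add] at hab
  obtain ⟨aa, haa, bb, hbb, hab'⟩ := hab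
  rw [hA, mem_image] at haa
  rw [hB, mem_image] at hbb
  rw [hC, mem_image] at hcc
  obtain ⟨z, -, hz⟩ := haa
  obtain ⟨x, -, hx⟩ := hbb
  obtain ⟨y, -, hy⟩ := hcc
  exact ⟨x, y, z, by rw [← habc, ← hab', ← hz, ← hx, ← hy]; ring⟩


/-- Let `ℓ, p, q` be distinct primes with `q ≡ 8 (mod 9)` and
`{ℓ mod 9, p mod 9} = {2, 5}`. Then for every prime `v` the equation
`y₀³ + ℓ + pq·y₂³ + qℓ²·y₃³ = 0` has a solution in `ℤ_v`. -/
theorem stmt_14 (ℓ p q : ℕ) (hℓ : ℓ.Prime) (hp : p.Prime) (hq : q.Prime)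
    (hℓp : ℓ ≠ p) (hℓq : ℓ ≠ q) (hpq : p ≠ q) (hq9 : q % 9 = 8)
    (h9 : (ℓ % 9 = 2 ∧ p % 9 = 5) ∨ (ℓ % 9 = 5 ∧ p % 9 = 2)) :
    ∀ (v : ℕ) [Fact v.Prime],
      ∃ y₀ y₂ y₃ : ℤ_[v],
        y₀ ^ 3 + (ℓ : ℤ_[v]) + (p : ℤ_[v]) * (q : ℤ_[v]) * y₂ ^ 3 +
          (q : ℤ_[v]) * (ℓ : ℤ_[v]) ^ 2 * y₃ ^ 3 = 0 := by
  intro v hv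
  have hl3 : ℓ % 3 = 2 := by rcases h9 with ⟨h1, h2⟩ | ⟨h1, h2⟩ <;> omega
  have hp3 : p % 3 = 2 := by rcases h9 with ⟨h1, h2⟩ | ⟨h1, h2⟩ <;> omega
  have hq3 : q % 3 = 2 := by omega
  by_cases hv3 : v = 3
  · -- the 3-adic case
    subst hv3
    set N : ℤ := (ℓ : ℤ) + p * q - q * ℓ ^ 2 with hN
    have hN9 : N % 9 = 1 := by
      have e1 : (ℓ : ℤ) ≡ ((ℓ % 9 : ℕ) : ℤ) [ZMOD 9] := by unfold Int.ModEq; omega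
      have e2 : (p : ℤ) ≡ ((p % 9 : ℕ) : ℤ) [ZMOD 9] := by unfold Int.ModEq; omega
      have e3 : (q : ℤ) ≡ ((q % 9 : ℕ) : ℤ) [ZMOD 9] := by unfold Int.ModEq; omega
      have e : N ≡ ((ℓ % 9 : ℕ) : ℤ) + ((p % 9 : ℕ) : ℤ) * ((q % 9 : ℕ) : ℤ)
          - ((q % 9 : ℕ) : ℤ) * ((ℓ % 9 : ℕ) : ℤ) ^ 2 [ZMOD 9] :=
        (e1.add (e2.mul e3)).sub (e3.mul (e1.pow 2))
      unfold Int.ModEq at e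
      rcases h9 with ⟨h1, h2⟩ | ⟨h1, h2⟩ <;> rw [h1, h2, hq9] at e <;> omega
    have hr : N % 27 = 1 ∨ N % 27 = 10 ∨ N % 27 = 19 := by
      have h1 : N % 27 % 9 = N % 9 := Int.emod_emod_of_dvd N (by norm_num)
      omega
    obtain ⟨a, h27, h3a⟩ : ∃ a : ℤ, (27 : ℤ) ∣ a ^ 3 + N ∧ ¬ (3 : ℤ) ∣ a := by
      rcases hr with h | h | h
      · exact ⟨-1, by norm_num; omega, by decide⟩
      · exact ⟨-4, by norm_num; omega, by decide⟩
      · exact ⟨-7, by norm_num; omega, by decide⟩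
    set A : ℤ_[3] := ((a : ℤ) : ℤ_[3]) with hA
    have hnormA : ‖A‖ = 1 := by
      refine le_antisymm A.norm_le_one (not_lt.mp ?_)
      rw [hA, PadicInt.norm_int_lt_one_iff_dvd]
      exact_mod_cast h3a
    have hsmall : ‖A ^ 3 + (N : ℤ_[3])‖ ≤ ((3 : ℕ) : ℝ) ^ (-(3 : ℕ) : ℤ) := by
      rw [show A ^ 3 + (N : ℤ_[3]) = ((a ^ 3 + N : ℤ) : ℤ_[3]) by push_cast; ring,
        PadicInt.norm_int_le_pow_iff_dvd]
      exact_mod_cast h27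
    have hlt : ‖A ^ 3 + (N : ℤ_[3])‖ < ‖3 * A ^ 2‖ ^ 2 := by
      have h3n : ‖(3 : ℤ_[3])‖ = (3 : ℝ)⁻¹ := by
        rw [show ((3 : ℤ_[3])) = (((3 : ℕ) : ℤ_[3])) by norm_num, PadicInt.norm_p]
        norm_num
      rw [norm_mul, norm_pow, hnormA, h3n]
      refine lt_of_le_of_lt hsmall ?_
      norm_num
    obtain ⟨z, hz⟩ := cube_root_exists (N : ℤ_[3]) A hlt
    refine ⟨z, 1, -1, ?_⟩
    rw [hN] at hz
    push_cast at hz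
    linear_combination hz
  · -- v ≠ 3
    have hcast : ∀ n : ℕ, n.Prime → v ≠ n → ((n : ZMod v) ≠ 0) := fun n hn hvn h0 => by
      rw [ZMod.natCast_eq_zero_iff] at h0
      exact hvn ((Nat.prime_dvd_prime_iff_eq hv.out hn).mp h0)
    set L : ZMod v → ℤ_[v] := fun x => ((x.val : ℕ) : ℤ_[v]) with hLdef
    have hL : ∀ x : ZMod v, PadicInt.toZMod (L x) = x := fun x => by
      rw [hLdef]; simp only [map_natCast]; exact ZMod.natCast_rightInverse x
    by_cases hvl : v = ℓ
    · -- v = ℓ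
      have hv31 : v % 3 ≠ 1 := by omega
      have hl0 : (ℓ : ZMod v) = 0 := by
        rw [ZMod.natCast_eq_zero_iff]
        exact hvl ▸ dvd_rfl
      obtain ⟨w, hw⟩ := cube_surj hv31 (-((p : ZMod v) * (q : ZMod v)))
      obtain ⟨z, hz⟩ := solve_one_var hv3 ((p : ℤ_[v]) * (q : ℤ_[v]))
        ((L w) ^ 3 + (ℓ : ℤ_[v])) 1
        (by rw [map_mul, map_natCast, map_natCast]
            exact mul_ne_zero (hcast p hp (by omega)) (hcast q hq (by omega)))
        (by rw [map_one]; exact one_ne_zero)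
        (by simp only [map_add, map_mul, map_pow, map_one, map_natCast, hL]
            linear_combination hw + hl0)
      exact ⟨L w, z, 0, by linear_combination hz⟩
    · by_cases hvpq : v = p ∨ v = q
      · -- v = p or v = q : ℓ is a unit, cube root of -ℓ exists
        have hv31 : v % 3 ≠ 1 := by rcases hvpq with rfl | rfl <;> omega
        obtain ⟨w, hw⟩ := cube_surj hv31 (-(ℓ : ZMod v))
        have hwne : w ≠ 0 := by
          intro h0
          rw [h0, zero_pow (by norm_num), eq_comm, neg_eq_zero] at hw
          exact hcast ℓ hℓ hvl hw
        obtain ⟨z, hz⟩ := solve_one_var hv3 1 (ℓ : ℤ_[v]) (L w)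
          (by rw [map_one]; exact one_ne_zero)
          (by rw [hL]; exact hwne)
          (by simp only [map_add, map_mul, map_pow, map_one, map_natCast, hL]
              linear_combination hw)
        exact ⟨z, 0, 0, by linear_combination hz⟩
      · -- generic case
        push_neg at hvpq
        obtain ⟨hvp, hvq⟩ := hvpq
        have hc1 : ((p : ZMod v) * (q : ZMod v)) ≠ 0 :=
          mul_ne_zero (hcast p hp hvp) (hcast q hq hvq)
        have hc2 : ((q : ZMod v) * (ℓ : ZMod v) ^ 2) ≠ 0 :=
          mul_ne_zero (hcast q hq hvq) (pow_ne_zero _ (hcast ℓ hℓ hvl))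
        obtain ⟨x, y, z, hsol⟩ := three_cubes_surj ((p : ZMod v) * (q : ZMod v))
          ((q : ZMod v) * (ℓ : ZMod v) ^ 2) hc1 hc2 (-(ℓ : ZMod v))
        have hnz : ¬(z = 0 ∧ x = 0 ∧ y = 0) := by
          rintro ⟨rfl, rfl, rfl⟩
          rw [zero_pow (by norm_num), mul_zero, mul_zero, add_zero, add_zero,
            eq_comm, neg_eq_zero] at hsol
          exact hcast ℓ hℓ hvl hsol
        by_cases hz0 : z ≠ 0
        · obtain ⟨z₀, hz₀⟩ := solve_one_var hv3 1
            ((ℓ : ℤ_[v]) + (p : ℤ_[v]) * (q : ℤ_[v]) * (L x) ^ 3 +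
              (q : ℤ_[v]) * (ℓ : ℤ_[v]) ^ 2 * (L y) ^ 3)
            (L z)
            (by rw [map_one]; exact one_ne_zero)
            (by rw [hL]; exact hz0)
            (by simp only [map_add, map_mul, map_one, map_pow, map_natCast, hL]
                linear_combination hsol)
          exact ⟨z₀, L x, L y, by linear_combination hz₀⟩
        · push_neg at hz0
          by_cases hx0 : x ≠ 0
          · obtain ⟨z₀, hz₀⟩ := solve_one_var hv3 ((p : ℤ_[v]) * (q : ℤ_[v]))
              ((L z) ^ 3 + (ℓ : ℤ_[v]) + (q : ℤ_[v]) * (ℓ : ℤ_[v]) ^ 2 * (L y) ^ 3)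
              (L x)
              (by rw [map_mul, map_natCast, map_natCast]; exact hc1)
              (by rw [hL]; exact hx0)
              (by simp only [map_add, map_mul, map_pow, map_natCast, hL]
                  linear_combination hsol)
            exact ⟨L z, z₀, L y, by linear_combination hz₀⟩
          · push_neg at hx0
            have hy0 : y ≠ 0 := fun h => hnz ⟨hz0, hx0, h⟩
            obtain ⟨z₀, hz₀⟩ := solve_one_var hv3 ((q : ℤ_[v]) * (ℓ : ℤ_[v]) ^ 2)
              ((L z) ^ 3 + (ℓ : ℤ_[v]) + (p : ℤ_[v]) * (q : ℤ_[v]) * (L x) ^ 3)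
              (L y)
              (by rw [map_mul, map_natCast, map_pow, map_natCast]; exact hc2)
              (by rw [hL]; exact hy0)
              (by simp only [map_add, map_mul, map_pow, map_natCast, hL]
                  linear_combination hsol)
            exact ⟨L z, L x, z₀, by linear_combination hz₀⟩
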